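/- Let n = 2. Then the graph G(V) has exactly q(q−1) vertices, every vertex of G(V) has exactly one neighbour, and G(V) has exactly q(q−1)/2 connected components. -/

import Mathlib

namespace FramePaper

variable {K : Type*} [Field K]

/-- The standard Hermitian form `Ψ(v,w) = ∑ i, v i * τ (w i)` on `Fin n → K`. -/
def Psi (τ : K → K) {n : ℕ} (v w : Fin n → K) : K :=
  ∑ i, v i * τ (w i)

lemma Psi_add_left (τ : K → K) {n : ℕ} (a b w : Fin n → K) :
    Psi τ (a + b) w = Psi τ a w + Psi τ b w := by
  simp [Psi, add_mul, Finset.sum_add_distrib]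

lemma Psi_smul_left (τ : K → K) {n : ℕ} (c : K) (a w : Fin n → K) :
    Psi τ (c • a) w = c * Psi τ a w := by
  simp [Psi, Finset.mul_sum, mul_assoc]

/-- The orthogonal complement `S^⊥ = {v | ∀ s ∈ S, Ψ(v,s) = 0}`. -/
def perp (τ : K → K) {n : ℕ} (S : Submodule K (Fin n → K)) :
    Submodule K (Fin n → K) where
  carrier := {v | ∀ s ∈ S, Psi τ v s = 0}
  add_mem' := by
    intro a b ha hb
    show ∀ s ∈ S, Psi τ (a + b) s = 0
    intro s hs
    rw [Psi_add_left, ha s hs, hb s hs, add_zero]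
  zero_mem' := by
    show ∀ s ∈ S, Psi τ 0 s = 0
    intro s hs
    simp [Psi]
  smul_mem' := by
    intro c a ha
    show ∀ s ∈ S, Psi τ (c • a) s = 0
    intro s hs
    rw [Psi_smul_left, ha s hs, mul_zero]

/-- A subspace `S` is non-degenerate iff `S ⊓ S^⊥ = ⊥`. -/
def Nondeg (τ : K → K) {n : ℕ} (S : Submodule K (Fin n → K)) : Prop :=
  S ⊓ perp τ S = ⊥

/-- Vertices of `G(V)`: the `1`-dimensional non-degenerate subspaces. -/
def IsVertex (τ : K → K) {n : ℕ} (S : Submodule K (Fin n → K)) : Prop :=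
  Module.finrank K S = 1 ∧ Nondeg τ S

/-- The graph `G(V)` on the `1`-dimensional non-degenerate subspaces of `V = Fin n → K`,
with `S, W` adjacent iff `S ≠ W` and `Ψ(s,w) = 0` for all `s ∈ S`, `w ∈ W`. -/
def FrameGraph (τ : K →+* K) (hτ2 : ∀ x, τ (τ x) = x) (n : ℕ) :
    SimpleGraph {S : Submodule K (Fin n → K) // IsVertex (⇑τ) S} where
  Adj S W := S ≠ W ∧ ∀ s ∈ S.1, ∀ w ∈ W.1, Psi (⇑τ) s w = 0
  symm := ⟨by
    rintro S W ⟨hne, h⟩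
    refine ⟨hne.symm, fun w hw s hs => ?_⟩
    have key : Psi (⇑τ) w s = τ (Psi (⇑τ) s w) := by
      simp only [Psi, map_sum, map_mul, hτ2]
      exact Finset.sum_congr rfl fun i _ => mul_comm _ _
    rw [key, h s hs w hw, map_zero]⟩
  loopless := ⟨fun S h => h.1 rfl⟩

/-- On a finite field with `q ^ 2` elements, `x ↦ x ^ q` is an involution. -/
lemma tau_invol [Fintype K] {q : ℕ} (hK : Fintype.card K = q ^ 2)
    (τ : K →+* K) (hτq : ∀ x, τ x = x ^ q) : ∀ x, τ (τ x) = x := fun x => by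
  rw [hτq, hτq, ← pow_mul, ← pow_two, ← hK, FiniteField.pow_card]

noncomputable instance instFintypeVertex [Fintype K] {n : ℕ} (τ : K → K) :
    Fintype {S : Submodule K (Fin n → K) // IsVertex τ S} := by
  have : Finite (Submodule K (Fin n → K)) :=
    Finite.of_injective (fun S => (S : Set (Fin n → K))) SetLike.coe_injective
  exact Fintype.ofFinite _

/-- The integer `d_m = q^{m-2} (q^{m-1} - (-1)^{m-1}) / (q+1)` (the division is exact). -/
def dZ (q m : ℕ) : ℤ :=
  ((q : ℤ) ^ (m - 2) * ((q : ℤ) ^ (m - 1) - (-1) ^ (m - 1))) / ((q : ℤ) + 1)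

/-! ### Auxiliary lemmas -/

section Aux

lemma Psi_smul_right (τ : K →+* K) {n : ℕ} (c : K) (a w : Fin n → K) :
    Psi (⇑τ) a (c • w) = τ c * Psi (⇑τ) a w := by
  simp only [Psi, Pi.smul_apply, smul_eq_mul, map_mul, Finset.mul_sum]
  exact Finset.sum_congr rfl fun i _ => by ring

lemma Psi_two (τ : K → K) (v w : Fin 2 → K) :
    Psi τ v w = v 0 * τ (w 0) + v 1 * τ (w 1) := by
  simp [Psi, Fin.sum_univ_two]

/-- `vperp ![a,b] = ![τ b, -τ a]`, an explicit orthogonal vector. -/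
def vperp (τ : K → K) (v : Fin 2 → K) : Fin 2 → K := ![τ (v 1), -(τ (v 0))]

lemma Psi_vperp_left (τ : K →+* K) (v : Fin 2 → K) :
    Psi (⇑τ) (vperp (⇑τ) v) v = 0 := by
  simp [Psi_two, vperp]; ring

lemma Psi_vperp_right (τ : K →+* K) (hτ2 : ∀ x, τ (τ x) = x) (v : Fin 2 → K) :
    Psi (⇑τ) v (vperp (⇑τ) v) = 0 := by
  simp [Psi_two, vperp, hτ2]; ring

lemma vperp_ne_zero (τ : K →+* K) {v : Fin 2 → K} (hv : v ≠ 0) :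
    vperp (⇑τ) v ≠ 0 := by
  intro h
  apply hv
  have h0 := congrFun h 0
  have h1 := congrFun h 1
  simp only [vperp, Matrix.cons_val_zero, Matrix.cons_val_one, Matrix.head_cons,
    Pi.zero_apply, neg_eq_zero] at h0 h1
  have e1 : v 1 = 0 := τ.injective (by simpa using h0)
  have e0 : v 0 = 0 := τ.injective (by simpa using h1)
  funext i
  fin_cases i <;> simpa [e0, e1]

lemma Psi_vperp_self (τ : K →+* K) (hτ2 : ∀ x, τ (τ x) = x) (v : Fin 2 → K) :
    Psi (⇑τ) (vperp (⇑τ) v) (vperp (⇑τ) v) = τ (Psi (⇑τ) v v) := by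
  simp [Psi_two, vperp, hτ2, map_add, map_mul]
  ring

/-- Any vector orthogonal (on the right of `v`) lies in the span of `vperp v`. -/
lemma mem_span_vperp (τ : K →+* K) (hτ2 : ∀ x, τ (τ x) = x) {v u : Fin 2 → K}
    (hv : v ≠ 0) (h : Psi (⇑τ) v u = 0) :
    u ∈ Submodule.span K {vperp (⇑τ) v} := by
  rw [Psi_two] at h
  -- apply τ to get a K-linear relation
  have h' : τ (v 0) * u 0 + τ (v 1) * u 1 = 0 := by
    have := congrArg τ h
    simpa [map_add, map_mul, hτ2] using this
  rw [Submodule.mem_span_singleton]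
  have hv' : v 0 ≠ 0 ∨ v 1 ≠ 0 := by
    by_contra hc
    push_neg at hc
    exact hv (funext fun i => by fin_cases i <;> simp [hc.1, hc.2])
  rcases hv' with h0 | h1
  · have ht : τ (v 0) ≠ 0 := fun hh => h0 (by simpa using τ.injective (by simpa using hh))
    refine ⟨-(u 1) / τ (v 0), funext fun i => ?_⟩
    fin_cases i <;>
      simp only [Pi.smul_apply, vperp, Matrix.cons_val_zero, Matrix.cons_val_one,
        Matrix.head_cons, smul_eq_mul, Fin.isValue, Fin.zero_eta, Fin.mk_one] <;>
      field_simp <;> linear_combination -h'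
  · have ht : τ (v 1) ≠ 0 := fun hh => h1 (by simpa using τ.injective (by simpa using hh))
    refine ⟨u 0 / τ (v 1), funext fun i => ?_⟩
    fin_cases i <;>
      simp only [Pi.smul_apply, vperp, Matrix.cons_val_zero, Matrix.cons_val_one,
        Matrix.head_cons, smul_eq_mul, Fin.isValue, Fin.zero_eta, Fin.mk_one] <;>
      field_simp <;> linear_combination -h'

end Aux

section Aux2
lemma isVertex_span_iff (τ : K →+* K) {v : Fin 2 → K} (hv : v ≠ 0) :
    IsVertex (⇑τ) (Submodule.span K {v}) ↔ Psi (⇑τ) v v ≠ 0 := by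
  constructor
  · rintro ⟨-, hnd⟩ hzero
    have hvperp : v ∈ perp (⇑τ) (Submodule.span K {v}) := by
      intro s hs
      obtain ⟨c, rfl⟩ := Submodule.mem_span_singleton.mp hs
      rw [Psi_smul_right, hzero, mul_zero]
    have : v ∈ Submodule.span K {v} ⊓ perp (⇑τ) (Submodule.span K {v}) :=
      ⟨Submodule.mem_span_singleton_self v, hvperp⟩
    rw [hnd, Submodule.mem_bot] at this
    exact hv this
  · intro hP
    refine ⟨finrank_span_singleton hv, ?_⟩
    rw [Nondeg, eq_bot_iff]
    rintro x ⟨hx1, hx2⟩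
    obtain ⟨c, rfl⟩ := Submodule.mem_span_singleton.mp hx1
    have := hx2 v (Submodule.mem_span_singleton_self v)
    rw [Psi_smul_left] at this
    rcases mul_eq_zero.mp this with hc | hc
    · simp [hc]
    · exact absurd hc hP

lemma vertex_gen {S : Submodule K (Fin 2 → K)} (τ : K → K) (h : IsVertex τ S) :
    ∃ v : Fin 2 → K, v ≠ 0 ∧ S = Submodule.span K {v} := by
  have hbot : S ≠ ⊥ := by
    intro hb
    rw [hb] at h
    simpa using h.1
  obtain ⟨v, hvS, hv⟩ := Submodule.exists_mem_ne_zero_of_ne_bot hbot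
  refine ⟨v, hv, ?_⟩
  refine (Submodule.eq_of_le_of_finrank_eq ((Submodule.span_singleton_le_iff_mem v S).mpr hvS) ?_).symm
  rw [finrank_span_singleton hv, h.1]

end Aux2

section Adj

lemma adj_unique (τ : K →+* K) (hτ2 : ∀ x, τ (τ x) = x)
    (S : {S : Submodule K (Fin 2 → K) // IsVertex (⇑τ) S}) :
    ∃! W, (FrameGraph τ hτ2 2).Adj S W := by
  obtain ⟨v, hv, hSv⟩ := vertex_gen (⇑τ) S.2
  have hPv : Psi (⇑τ) v v ≠ 0 := (isVertex_span_iff τ hv).mp (hSv ▸ S.2)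
  set w := vperp (⇑τ) v with hw_def
  have hw : w ≠ 0 := vperp_ne_zero τ hv
  have hPw : Psi (⇑τ) w w ≠ 0 := by
    rw [hw_def, Psi_vperp_self τ hτ2]
    intro h
    exact hPv (by simpa using τ.injective (by simpa using h))
  refine ⟨⟨Submodule.span K {w}, (isVertex_span_iff τ hw).mpr hPw⟩, (show _ ∧ _ from ⟨?_, ?_⟩), ?_⟩
  · intro h
    have hspan : Submodule.span K {w} = Submodule.span K {v} := by
      rw [← hSv]; exact (congrArg Subtype.val h).symm
    obtain ⟨c, hc⟩ := Submodule.mem_span_singleton.mp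
      (hspan ▸ Submodule.mem_span_singleton_self w)
    have hc0 : c ≠ 0 := by rintro rfl; rw [zero_smul] at hc; exact hw hc.symm
    have := Psi_vperp_right τ hτ2 v
    rw [← hw_def, ← hc, Psi_smul_right] at this
    rcases mul_eq_zero.mp this with h' | h'
    · exact hc0 (by simpa using τ.injective (by simpa using h'))
    · exact hPv h'
  · intro s hs w' hw'
    rw [hSv] at hs
    obtain ⟨a, rfl⟩ := Submodule.mem_span_singleton.mp hs
    obtain ⟨b, rfl⟩ := Submodule.mem_span_singleton.mp hw'
    rw [Psi_smul_left, Psi_smul_right, hw_def, Psi_vperp_right τ hτ2]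
    ring
  · rintro W' ⟨hne, horth⟩
    obtain ⟨u, hu, hW'u⟩ := vertex_gen (⇑τ) W'.2
    have hvu : Psi (⇑τ) v u = 0 :=
      horth v (hSv ▸ Submodule.mem_span_singleton_self v)
        u (hW'u ▸ Submodule.mem_span_singleton_self u)
    have humem : u ∈ Submodule.span K {w} := mem_span_vperp τ hτ2 hv hvu
    apply Subtype.ext
    rw [hW'u]
    refine Submodule.eq_of_le_of_finrank_eq
      ((Submodule.span_singleton_le_iff_mem u _).mpr humem) ?_
    rw [finrank_span_singleton hu, finrank_span_singleton hw]

end Adj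

section Count
variable [Fintype K]

lemma exists_pow_eq_neg_one (q : ℕ) (hq : 2 ≤ q) (hK : Fintype.card K = q ^ 2) :
    ∃ α : K, α ^ (q + 1) = -1 := by
  classical
  have hq4 : 4 ≤ q ^ 2 := by nlinarith
  have hcardu : Fintype.card Kˣ = q ^ 2 - 1 := by
    rw [Fintype.card_units, hK]
  by_cases hne : (-1 : K) = 1
  · exact ⟨1, by rw [one_pow, hne]⟩
  -- q must be odd
  have hqodd : q % 2 = 1 := by
    by_contra hodd
    have hq2 : q % 2 = 0 := by omega
    have hodd' : ¬ (2 ∣ Fintype.card Kˣ) := by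
      rw [hcardu]
      intro ⟨k, hk⟩
      have hqq : q ^ 2 % 2 = 0 := by
        rw [pow_two, Nat.mul_mod, hq2]
      omega
    have hu : (-1 : Kˣ) = 1 := by
      have h2 : orderOf (-1 : Kˣ) ∣ 2 := orderOf_dvd_of_pow_eq_one (by rw [pow_two]; simp)
      have hc : orderOf (-1 : Kˣ) ∣ Fintype.card Kˣ := orderOf_dvd_card
      rcases (Nat.dvd_prime Nat.prime_two).mp h2 with h | h
      · exact orderOf_eq_one_iff.mp h
      · exact absurd (h ▸ hc) hodd'
    exact hne (by simpa using congrArg Units.val hu)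
  -- q odd: use a generator of the cyclic group of units
  obtain ⟨g, hg⟩ := IsCyclic.exists_generator (α := Kˣ)
  have hord : orderOf g = q ^ 2 - 1 := by
    rw [orderOf_eq_card_of_forall_mem_zpowers hg, Nat.card_eq_fintype_card, hcardu]
  set e : ℕ := (q ^ 2 - 1) / 2 with he
  have h2e : 2 * e = q ^ 2 - 1 := by
    have hqq : q ^ 2 % 2 = 1 := by
      rw [pow_two, Nat.mul_mod, hqodd]
    omega
  have hgen : (g : K) ^ e = -1 := by
    have hsq : ((g : K) ^ e) ^ 2 = 1 := by
      have h1 : (g : Kˣ) ^ Fintype.card Kˣ = 1 := pow_card_eq_one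
      have h2 : (g : K) ^ (q ^ 2 - 1) = 1 := by
        rw [← hcardu, ← Units.val_pow_eq_pow_val, h1, Units.val_one]
      rw [← pow_mul, mul_comm e 2, h2e, h2]
    have hne1 : (g : K) ^ e ≠ 1 := by
      intro h1
      have hu1 : (g : Kˣ) ^ e = 1 := Units.ext (by simpa using h1)
      have hdvd := orderOf_dvd_of_pow_eq_one hu1
      rw [hord] at hdvd
      have he_pos : 0 < e := by omega
      have := Nat.le_of_dvd he_pos hdvd
      omega
    rcases mul_eq_zero.mp (show ((g:K)^e - 1) * ((g:K)^e + 1) = 0 by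
        linear_combination hsq) with h | h
    · exact absurd (by linear_combination h) hne1
    · linear_combination h
  refine ⟨(g : K) ^ ((q - 1) / 2), ?_⟩
  rw [← pow_mul]
  have hq1 : 2 * ((q - 1) / 2) = q - 1 := by omega
  have key : 2 * ((q - 1) / 2 * (q + 1)) = 2 * e := by
    calc 2 * ((q - 1) / 2 * (q + 1)) = 2 * ((q - 1) / 2) * (q + 1) := by ring
    _ = (q - 1) * (q + 1) := by rw [hq1]
    _ = q ^ 2 - 1 := by
        zify [show (1:ℕ) ≤ q by omega, show (1:ℕ) ≤ q ^ 2 by omega]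
        ring
    _ = 2 * e := h2e.symm
  rw [Nat.eq_of_mul_eq_mul_left (by norm_num) key, hgen]

lemma card_roots_neg_one (q : ℕ) (hq : 2 ≤ q) (hK : Fintype.card K = q ^ 2) :
    Nat.card {b : K // b ^ (q + 1) = -1} = q + 1 := by
  classical
  have hq4 : 4 ≤ q ^ 2 := by nlinarith
  obtain ⟨α, hα⟩ := exists_pow_eq_neg_one q hq hK
  have hα0 : α ≠ 0 := by
    intro h
    rw [h, zero_pow (by omega)] at hα
    exact neg_ne_zero.mpr (one_ne_zero (α := K)) hα.symm
  -- a primitive (q+1)-st root of unity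
  have hcardu : Fintype.card Kˣ = q ^ 2 - 1 := by rw [Fintype.card_units, hK]
  obtain ⟨g, hg⟩ := IsCyclic.exists_generator (α := Kˣ)
  have hord : orderOf g = q ^ 2 - 1 := by
    rw [orderOf_eq_card_of_forall_mem_zpowers hg, Nat.card_eq_fintype_card, hcardu]
  have hfact : q ^ 2 - 1 = (q - 1) * (q + 1) := by
    zify [show (1:ℕ) ≤ q by omega, show (1:ℕ) ≤ q ^ 2 by omega]
    ring
  have hdvd : (q - 1) ∣ (q ^ 2 - 1) := ⟨q + 1, hfact⟩
  have hordz : orderOf (g ^ (q - 1)) = q + 1 := by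
    rw [orderOf_pow, hord, Nat.gcd_eq_right hdvd, hfact,
      Nat.mul_div_cancel_left _ (by omega : 0 < q - 1)]
  have hprim : IsPrimitiveRoot ((g ^ (q - 1) : Kˣ) : K) (q + 1) :=
    IsPrimitiveRoot.coe_units_iff.mpr (hordz ▸ IsPrimitiveRoot.orderOf (g ^ (q - 1)))
  have hcard1 : Fintype.card {x : K // x ^ (q + 1) = 1} = q + 1 := by
    rw [Fintype.card_congr (Equiv.subtypeEquivRight
      (fun x => (Polynomial.mem_nthRootsFinset (by omega : 0 < q + 1) (1 : K)).symm)),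
      Fintype.card_coe]
    exact hprim.card_nthRootsFinset
  have e : {b : K // b ^ (q + 1) = -1} ≃ {x : K // x ^ (q + 1) = 1} :=
    { toFun := fun b => ⟨b.1 / α, by rw [div_pow, b.2, hα]; simp⟩
      invFun := fun x => ⟨α * x.1, by rw [mul_pow, hα, x.2, mul_one]⟩
      left_inv := fun b => Subtype.ext (by field_simp)
      right_inv := fun x => Subtype.ext (by field_simp) }
  rw [Nat.card_eq_fintype_card, Fintype.card_congr e, hcard1]

lemma card_vertices (q : ℕ) (hq : 2 ≤ q) (hK : Fintype.card K = q ^ 2)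
    (τ : K →+* K) (hτq : ∀ x, τ x = x ^ q) :
    Nat.card {S : Submodule K (Fin 2 → K) // IsVertex (⇑τ) S} = q * (q - 1) := by
  classical
  have hq4 : 4 ≤ q ^ 2 := by nlinarith
  -- the bijection with `Option {b // b^(q+1) ≠ -1}`
  have h10 : (![1, (0:K)] : Fin 2 → K) ≠ 0 := by
    intro h
    simpa using congrFun h 0
  have hvb : ∀ b : K, (![1, b] : Fin 2 → K) ≠ 0 := by
    intro b h
    simpa using congrFun h 0
  have h01 : (![0, (1:K)] : Fin 2 → K) ≠ 0 := by
    intro h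
    simpa using congrFun h 1
  have hPsib : ∀ b : K, Psi (⇑τ) ![1, b] ![1, b] = 1 + b ^ (q + 1) := by
    intro b
    rw [Psi_two]
    simp only [Matrix.cons_val_zero, Matrix.cons_val_one, Matrix.head_cons, hτq]
    ring
  have hPsi01 : Psi (⇑τ) ![0, (1:K)] ![0, 1] = 1 := by
    rw [Psi_two]
    simp [hτq]
  set f : Option {b : K // ¬ (b ^ (q + 1) = -1)} →
      {S : Submodule K (Fin 2 → K) // IsVertex (⇑τ) S} :=
    fun o => Option.rec
      ⟨Submodule.span K {![0, 1]}, (isVertex_span_iff τ h01).mpr (by rw [hPsi01]; exact one_ne_zero)⟩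
      (fun b => ⟨Submodule.span K {![1, b.1]}, (isVertex_span_iff τ (hvb b.1)).mpr (by
        rw [hPsib]
        intro hcon
        exact b.2 (by linear_combination hcon))⟩) o with hf
  have hbij : Function.Bijective f := by
    constructor
    · rintro (_ | b) (_ | b') h
      · rfl
      · exfalso
        have hsp : Submodule.span K {![0, (1:K)]} = Submodule.span K {![1, b'.1]} :=
          congrArg Subtype.val h
        obtain ⟨c, hc⟩ := Submodule.mem_span_singleton.mp
          (hsp ▸ Submodule.mem_span_singleton_self (![0, 1] : Fin 2 → K))
        have h0 := congrFun hc 0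
        have h1 := congrFun hc 1
        simp only [Pi.smul_apply, Matrix.cons_val_zero, Matrix.cons_val_one, Matrix.head_cons,
          smul_eq_mul, mul_one] at h0 h1
        rw [h0] at h1
        simpa using h1
      · exfalso
        have hsp : Submodule.span K {![1, b.1]} = Submodule.span K {![0, (1:K)]} :=
          congrArg Subtype.val h
        obtain ⟨c, hc⟩ := Submodule.mem_span_singleton.mp
          (hsp.symm ▸ Submodule.mem_span_singleton_self (![0, 1] : Fin 2 → K))
        have h0 := congrFun hc 0
        have h1 := congrFun hc 1
        simp only [Pi.smul_apply, Matrix.cons_val_zero, Matrix.cons_val_one, Matrix.head_cons,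
          smul_eq_mul, mul_one] at h0 h1
        rw [h0] at h1
        simpa using h1
      · have hsp : Submodule.span K {![1, b.1]} = Submodule.span K {![1, b'.1]} :=
          congrArg Subtype.val h
        obtain ⟨c, hc⟩ := Submodule.mem_span_singleton.mp
          (hsp ▸ Submodule.mem_span_singleton_self (![1, b'.1] : Fin 2 → K))
        have h0 := congrFun hc 0
        have h1 := congrFun hc 1
        simp only [Pi.smul_apply, Matrix.cons_val_zero, Matrix.cons_val_one, Matrix.head_cons,
          smul_eq_mul, mul_one] at h0 h1
        rw [h0, one_mul] at h1
        have : b = b' := Subtype.ext h1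
        rw [this]
    · intro S
      obtain ⟨v, hv, hSv⟩ := vertex_gen (⇑τ) S.2
      have hPv : Psi (⇑τ) v v ≠ 0 := (isVertex_span_iff τ hv).mp (hSv ▸ S.2)
      by_cases h0 : v 0 = 0
      · refine ⟨none, ?_⟩
        apply Subtype.ext
        have h1 : v 1 ≠ 0 := by
          intro h1
          exact hv (funext fun i => by fin_cases i <;> simp [h0, h1])
        have hveq : v = v 1 • ![0, 1] := by
          funext i
          fin_cases i <;> simp [h0]
        show Submodule.span K {![0,1]} = S.1
        rw [hSv, hveq, Submodule.span_singleton_smul_eq (IsUnit.mk0 _ h1)]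
      · set b := v 1 / v 0 with hb_def
        have hveq : v = v 0 • ![1, b] := by
          funext i
          fin_cases i <;> simp [hb_def]
          field_simp
        have hb : ¬ (b ^ (q + 1) = -1) := by
          intro hcon
          apply hPv
          rw [hveq, Psi_smul_left, Psi_smul_right, hPsib, hcon]
          simp
        refine ⟨some ⟨b, hb⟩, ?_⟩
        apply Subtype.ext
        show Submodule.span K {![1, b]} = S.1
        rw [hSv, hveq, Submodule.span_singleton_smul_eq (IsUnit.mk0 _ h0)]
  have hcount : Nat.card {S : Submodule K (Fin 2 → K) // IsVertex (⇑τ) S} =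
      Nat.card (Option {b : K // ¬ (b ^ (q + 1) = -1)}) :=
    (Nat.card_eq_of_bijective f hbij).symm
  rw [hcount, Nat.card_eq_fintype_card, Fintype.card_option]
  have hcompl : Fintype.card {b : K // ¬ (b ^ (q + 1) = -1)} =
      q ^ 2 - (q + 1) := by
    rw [Fintype.card_subtype_compl, hK, ← Nat.card_eq_fintype_card,
      card_roots_neg_one q hq hK]
  rw [hcompl]
  zify [show q + 1 ≤ q ^ 2 by nlinarith, show 1 + q ≤ q ^ 2 by nlinarith, show 1 ≤ q by omega]
  ring

end Count

/-- For `n = 2`, the graph `G(V)` has exactly `q(q-1)` vertices, every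
vertex has exactly one neighbour, and there are exactly `q(q-1)/2` connected components. -/
theorem statement13 [Fintype K] (q : ℕ) (hq : IsPrimePow q)
    (hK : Fintype.card K = q ^ 2) (τ : K →+* K) (hτq : ∀ x, τ x = x ^ q) :
    Nat.card {S : Submodule K (Fin 2 → K) // IsVertex (⇑τ) S} = q * (q - 1) ∧
    (∀ S, ∃! W, (FrameGraph τ (tau_invol hK τ hτq) 2).Adj S W) ∧
    Nat.card ((FrameGraph τ (tau_invol hK τ hτq) 2).ConnectedComponent) = q * (q - 1) / 2 := by
  classical
  have hq2 : 2 ≤ q := hq.two_le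
  set G := FrameGraph τ (tau_invol hK τ hτq) 2 with hG
  have hadj : ∀ S, ∃! W, G.Adj S W := adj_unique τ (tau_invol hK τ hτq)
  refine ⟨card_vertices q hq2 hK τ hτq, hadj, ?_⟩
  set μ : {S : Submodule K (Fin 2 → K) // IsVertex (⇑τ) S} →
      {S : Submodule K (Fin 2 → K) // IsVertex (⇑τ) S} := fun S => (hadj S).choose with hμ
  have hμadj : ∀ S, G.Adj S (μ S) := fun S => (hadj S).choose_spec.1
  have hμuniq : ∀ S W, G.Adj S W → W = μ S := fun S W h => (hadj S).choose_spec.2 W h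
  have hreach : ∀ S W, G.Reachable S W → S = W ∨ G.Adj S W := by
    intro S W h
    obtain ⟨p⟩ := h
    induction p with
    | nil => exact Or.inl rfl
    | cons h p ih =>
      rcases ih with rfl | hadj'
      · exact Or.inr h
      · left
        rw [hμuniq _ _ h.symm, hμuniq _ _ hadj']
  letI : Fintype G.ConnectedComponent := Fintype.ofFinite _
  have hfib : ∀ c : G.ConnectedComponent,
      Nat.card {S // G.connectedComponentMk S = c} = 2 := by
    refine SimpleGraph.ConnectedComponent.ind ?_
    intro S
    rw [Nat.card_eq_two_iff' ⟨S, rfl⟩]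
    refine ⟨⟨μ S, (SimpleGraph.ConnectedComponent.eq).mpr (hμadj S).symm.reachable⟩, ?_, ?_⟩
    · intro hcon
      exact (hμadj S).ne' (congrArg Subtype.val hcon)
    · rintro ⟨W, hW⟩ hne
      have hWS : W ≠ S := fun h => hne (Subtype.ext h)
      rcases hreach W S ((SimpleGraph.ConnectedComponent.eq).mp hW) with h | h
      · exact absurd h hWS
      · exact Subtype.ext (hμuniq S W h.symm)
  have htot : Fintype.card {S : Submodule K (Fin 2 → K) // IsVertex (⇑τ) S} =
      2 * Fintype.card G.ConnectedComponent := by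
    calc Fintype.card {S : Submodule K (Fin 2 → K) // IsVertex (⇑τ) S}
        = Fintype.card (Σ c : G.ConnectedComponent,
            {S // G.connectedComponentMk S = c}) :=
          (Fintype.card_congr (Equiv.sigmaFiberEquiv G.connectedComponentMk)).symm
      _ = ∑ c : G.ConnectedComponent,
            Fintype.card {S // G.connectedComponentMk S = c} := Fintype.card_sigma
      _ = ∑ _c : G.ConnectedComponent, 2 :=
          Finset.sum_congr rfl fun c _ => by rw [← Nat.card_eq_fintype_card, hfib c]
      _ = 2 * Fintype.card G.ConnectedComponent := by
          rw [Finset.sum_const, Finset.card_univ, smul_eq_mul, mul_comm]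
  have hv := card_vertices q hq2 hK τ hτq
  rw [Nat.card_eq_fintype_card] at hv ⊢
  omega





end FramePaper
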